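/- arXiv:1312.7202 — 2 statements merged into one kernel-verified Lean document; each statement's English description precedes it below -/
import Mathlib

section
/- Let K be a number field of degree d with r_1 real embeddings and r_2 pairs of complex embeddings and discriminant D_K. For Q ≥ 1, the set Γ = {γ ∈ O_K : |γ|_v ≤ Q^{d_v} for all archimedean places v} has cardinality at most 2^{r_1+r_2} π^{r_2} (Q + θ)^d |D_K|^{-1/2}, where θ = max{1, max_σ (|σ(w_1)| + ... + |σ(w_d)|)} for a fixed Z-basis w_1,...,w_d of O_K. -/
open NumberField Module MeasureTheory NumberField.mixedEmbedding
open scoped Pointwise ENNReal NNReal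

/-- Quantitative version: the set `Γ = {γ ∈ O_K : |γ|_v ≤ Q^{d_v} for all archimedean v}` has
cardinality at most `2^(r₁+r₂) * π^(r₂) * (Q + θ)^d * |D_K|^(-1/2)`, where
`θ = max(1, max_σ (|σ w₁| + ⋯ + |σ w_d|))` for a `ℤ`-basis `w₁, …, w_d` of `O_K`. -/
theorem stmt_2 (K : Type*) [Field K] [NumberField K]
    (ι : Type*) [Fintype ι] (b : Basis ι ℤ (𝓞 K))
    (θ : ℝ)
    (hθ : θ = max 1 (⨆ σ : K →+* ℂ, ∑ i, ‖σ (algebraMap (𝓞 K) K (b i))‖))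
    (Q : ℝ) (hQ : 1 ≤ Q) :
    (Nat.card {γ : 𝓞 K | ∀ v : InfinitePlace K,
        v (algebraMap (𝓞 K) K γ) ^ v.mult ≤ Q ^ v.mult} : ℝ) ≤
      2 ^ (InfinitePlace.nrRealPlaces K + InfinitePlace.nrComplexPlaces K) *
        Real.pi ^ (InfinitePlace.nrComplexPlaces K) * (Q + θ) ^ (finrank ℚ K) *
        (Real.sqrt |(discr K : ℝ)|)⁻¹ := by
  classical
  have hθ1 : (1:ℝ) ≤ θ := hθ ▸ le_max_left _ _
  have hQ0 : (0:ℝ) < Q := lt_of_lt_of_le one_pos hQ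
  set R : ℝ := Q + θ with hR
  have hR0 : (0:ℝ) ≤ R := by positivity
  clear_value R
  -- simpler description of the set
  have hsets : {γ : 𝓞 K | ∀ v : InfinitePlace K,
        v (algebraMap (𝓞 K) K γ) ^ v.mult ≤ Q ^ v.mult}
      = {γ : 𝓞 K | ∀ v : InfinitePlace K, v (algebraMap (𝓞 K) K γ) ≤ Q} := by
    ext γ
    simp only [Set.mem_setOf_eq]
    refine forall_congr' fun v => ?_
    exact pow_le_pow_iff_left₀ (apply_nonneg v _) (le_trans zero_le_one hQ)
      (Nat.pos_iff_ne_zero.mp InfinitePlace.mult_pos)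
  rw [hsets]
  set Γ : Set (𝓞 K) := {γ : 𝓞 K | ∀ v : InfinitePlace K, v (algebraMap (𝓞 K) K γ) ≤ Q} with hΓ
  -- finiteness
  have hfin : Γ.Finite := by
    have hS := NumberField.Embeddings.finite_of_norm_le K ℂ Q
    refine Set.Finite.subset (hS.preimage
      ((NumberField.RingOfIntegers.coe_injective (K := K)).injOn)) ?_
    intro γ hγ
    refine ⟨NumberField.RingOfIntegers.isIntegral_coe γ, fun φ => ?_⟩
    simpa [InfinitePlace.apply] using hγ (InfinitePlace.mk φ)
  -- the lattice
  set f : (𝓞 K) →ₗ[ℤ] (mixedSpace K) :=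
    ((mixedEmbedding K).comp (algebraMap (𝓞 K) K)).toIntAlgHom.toLinearMap with hfdef
  have hfapp : ∀ x : 𝓞 K, f x = mixedEmbedding K (algebraMap (𝓞 K) K x) := fun x => rfl
  have hf_inj : Function.Injective f := by
    intro x y h
    rw [hfapp, hfapp] at h
    exact (NumberField.RingOfIntegers.coe_injective (K := K)) ((mixedEmbedding K).injective h)
  have hrange : LinearMap.range f = mixedEmbedding.integerLattice K := rfl
  set bL : Basis ι ℤ (mixedEmbedding.integerLattice K) :=
    b.map (LinearEquiv.ofInjective f hf_inj) with hbL
  set c : Basis ι ℝ (mixedSpace K) := bL.ofZLatticeBasis ℝ _ with hcdef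
  have hc : ∀ i, c i = mixedEmbedding K (algebraMap (𝓞 K) K (b i)) := by
    intro i
    rw [hcdef, Basis.ofZLatticeBasis_apply, hbL, Basis.map_apply, ← hfapp]
    rfl
  set F : Set (mixedSpace K) := ZSpan.fundamentalDomain c with hFdef
  have hFD : IsAddFundamentalDomain (mixedEmbedding.integerLattice K) F volume := by
    rw [show (mixedEmbedding.integerLattice K) = Submodule.span ℤ (Set.range c) from
      (bL.ofZLatticeBasis_span ℝ).symm]
    exact ZSpan.isAddFundamentalDomain c volume
  have hFmeas : MeasurableSet F := ZSpan.fundamentalDomain_measurableSet c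
  have hFne : volume F ≠ ⊤ := (ZSpan.fundamentalDomain_isBounded c).measure_lt_top.ne
  set D : ℝ := Real.sqrt |(discr K : ℝ)| with hDdef
  have hD0 : 0 < D := Real.sqrt_pos.mpr (abs_pos.mpr (by exact_mod_cast discr_ne_zero K))
  set covol : ℝ := (2⁻¹:ℝ) ^ InfinitePlace.nrComplexPlaces K * D with hcovol
  have hcovol0 : 0 < covol := by positivity
  have hvolF : volume F = ENNReal.ofReal covol := by
    have h1 : ZLattice.covolume (mixedEmbedding.integerLattice K) volume = (volume F).toReal :=
      ZLattice.covolume_eq_measure_fundamentalDomain _ _ hFD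
    have h2 := mixedEmbedding.covolume_integerLattice K
    rw [h1] at h2
    rw [← ENNReal.ofReal_toReal hFne, h2, hcovol, hDdef]
  -- bound on places of basis vectors
  have hθw : ∀ w : InfinitePlace K, (∑ i, w (algebraMap (𝓞 K) K (b i))) ≤ θ := by
    intro w
    rw [hθ]
    refine le_max_of_le_right ?_
    have heq : (∑ i, w (algebraMap (𝓞 K) K (b i)))
        = ∑ i, ‖w.embedding (algebraMap (𝓞 K) K (b i))‖ := by
      refine Finset.sum_congr rfl fun i _ => ?_
      rw [← InfinitePlace.norm_embedding_eq]
    rw [heq]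
    exact le_ciSup (f := fun σ : K →+* ℂ => ∑ i, ‖σ (algebraMap (𝓞 K) K (b i))‖)
      (Set.Finite.bddAbove (Set.finite_range _)) w.embedding
  -- elements of F are bounded by θ at all places
  have hF : ∀ y ∈ F, ∀ w : InfinitePlace K, normAtPlace w y ≤ θ := by
    intro y hy w
    have hy' := (ZSpan.mem_fundamentalDomain c).mp hy
    calc normAtPlace w y = normAtPlace w (∑ i, c.repr y i • c i) := by rw [Module.Basis.sum_repr]
      _ ≤ ∑ i, normAtPlace w (c.repr y i • c i) :=
          Finset.le_sum_of_subadditive _ (map_zero (normAtPlace w)).le (normAtPlace_add_le w) _ _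
      _ = ∑ i, |c.repr y i| * normAtPlace w (c i) := by
          refine Finset.sum_congr rfl fun i _ => normAtPlace_smul w _ _
      _ ≤ ∑ i, 1 * normAtPlace w (c i) := by
          refine Finset.sum_le_sum fun i _ => ?_
          refine mul_le_mul_of_nonneg_right ?_ (normAtPlace_nonneg _ _)
          have := hy' i
          rw [Set.mem_Ico] at this
          rw [abs_of_nonneg this.1]
          exact this.2.le
      _ = ∑ i, w (algebraMap (𝓞 K) K (b i)) := by
          refine Finset.sum_congr rfl fun i _ => ?_
          rw [one_mul, hc i, normAtPlace_apply]
      _ ≤ θ := hθw w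
  -- the box
  set Box : Set (mixedSpace K) :=
    (Set.univ.pi fun _ : {w : InfinitePlace K // InfinitePlace.IsReal w} => Set.Icc (-R) R) ×ˢ
      (Set.univ.pi fun _ : {w : InfinitePlace K // InfinitePlace.IsComplex w} =>
        Metric.closedBall (0:ℂ) R) with hBox
  have hmemBox : ∀ x : mixedSpace K, (∀ w : InfinitePlace K, normAtPlace w x ≤ R) → x ∈ Box := by
    intro x hx
    refine ⟨fun i _ => ?_, fun i _ => ?_⟩
    · have := hx i.1
      rw [normAtPlace_apply_of_isReal i.2, Subtype.coe_eta, Real.norm_eq_abs] at this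
      exact Set.mem_Icc.mpr (abs_le.mp this)
    · have := hx i.1
      rw [normAtPlace_apply_of_isComplex i.2, Subtype.coe_eta] at this
      exact mem_closedBall_zero_iff.mpr this
  -- translates of F by points of Γ lie in the box
  have hsub : ∀ γ ∈ Γ, (f γ) +ᵥ F ⊆ Box := by
    intro γ hγ x hx
    obtain ⟨y, hy, rfl⟩ := hx
    refine hmemBox _ fun w => ?_
    have h1 : normAtPlace w (f γ) ≤ Q := by
      rw [hfapp, normAtPlace_apply]
      exact hγ w
    calc normAtPlace w (f γ +ᵥ y) = normAtPlace w (f γ + y) := rfl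
      _ ≤ normAtPlace w (f γ) + normAtPlace w y := normAtPlace_add_le w _ _
      _ ≤ Q + θ := add_le_add h1 (hF y hy w)
      _ ≤ R := hR.ge
  -- volume of the box
  have hBoxvol : volume Box = (ENNReal.ofReal (2*R)) ^ InfinitePlace.nrRealPlaces K *
      ((ENNReal.ofReal R) ^ 2 * (NNReal.pi : ℝ≥0∞)) ^ InfinitePlace.nrComplexPlaces K := by
    rw [hBox, MeasureTheory.Measure.volume_eq_prod, MeasureTheory.Measure.prod_prod,
      MeasureTheory.volume_pi_pi, MeasureTheory.volume_pi_pi]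
    simp_rw [Real.volume_Icc, Complex.volume_closedBall, Finset.prod_const, Finset.card_univ]
    congr 2
    ring_nf
  -- counting
  set s : Finset (𝓞 K) := hfin.toFinset with hsdef
  have hcard : Nat.card Γ = s.card := Nat.card_eq_card_finite_toFinset hfin
  have key : (s.card : ℝ≥0∞) * volume F ≤ volume Box := by
    have hdisj : (↑s : Set (𝓞 K)).Pairwise (Function.onFun (AEDisjoint volume) fun γ => (f γ) +ᵥ F) := by
      intro γ _ γ' _ hne
      have hneL : (⟨f γ, ⟨γ, rfl⟩⟩ : mixedEmbedding.integerLattice K) ≠ ⟨f γ', ⟨γ', rfl⟩⟩ :=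
        fun h => hne (hf_inj (congrArg Subtype.val h))
      exact hFD.aedisjoint hneL
    have hmeas : ∀ γ ∈ s, NullMeasurableSet ((f γ) +ᵥ F) volume :=
      fun γ _ => (hFmeas.const_vadd (f γ)).nullMeasurableSet
    calc (s.card : ℝ≥0∞) * volume F
        = ∑ γ ∈ s, volume ((f γ) +ᵥ F) := by
          rw [Finset.sum_congr rfl fun γ _ => measure_vadd volume (f γ) F,
            Finset.sum_const, nsmul_eq_mul]
      _ = volume (⋃ γ ∈ s, (f γ) +ᵥ F) := (measure_biUnion_finset₀ hdisj hmeas).symm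
      _ ≤ volume Box := by
          refine measure_mono (Set.iUnion₂_subset fun γ hγ => hsub γ ?_)
          exact hfin.mem_toFinset.mp hγ
  -- pass to real numbers
  rw [hvolF, hBoxvol] at key
  have hRne : ENNReal.ofReal (2*R) ^ InfinitePlace.nrRealPlaces K *
      ((ENNReal.ofReal R) ^ 2 * (NNReal.pi : ℝ≥0∞)) ^ InfinitePlace.nrComplexPlaces K ≠ ⊤ :=
    ENNReal.mul_ne_top (ENNReal.pow_ne_top ENNReal.ofReal_ne_top)
      (ENNReal.pow_ne_top (ENNReal.mul_ne_top (ENNReal.pow_ne_top ENNReal.ofReal_ne_top)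
        ENNReal.coe_ne_top))
  have key2 : (s.card : ℝ) * covol ≤ (2*R) ^ InfinitePlace.nrRealPlaces K *
      (R^2 * Real.pi) ^ InfinitePlace.nrComplexPlaces K := by
    have := (ENNReal.toReal_le_toReal (ENNReal.mul_ne_top (ENNReal.natCast_ne_top _) ENNReal.ofReal_ne_top) hRne).mpr key
    rw [ENNReal.toReal_mul, ENNReal.toReal_natCast, ENNReal.toReal_ofReal hcovol0.le,
      ENNReal.toReal_mul, ENNReal.toReal_pow, ENNReal.toReal_pow, ENNReal.toReal_mul,
      ENNReal.toReal_pow, ENNReal.toReal_ofReal (by linarith : (0:ℝ) ≤ 2*R), ENNReal.toReal_ofReal hR0,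
      ENNReal.coe_toReal, NNReal.coe_real_pi] at this
    exact this
  -- final algebra
  have hd : InfinitePlace.nrRealPlaces K + 2 * InfinitePlace.nrComplexPlaces K = finrank ℚ K :=
    InfinitePlace.card_add_two_mul_card_eq_rank K
  have hNs : (Nat.card Γ : ℝ) = (s.card : ℝ) := by exact_mod_cast hcard
  rw [hNs]
  rw [← hd]
  have hπ0 : (0:ℝ) < Real.pi := Real.pi_pos
  clear_value D
  clear hvolF hFD hFmeas hFne hF hθw hsub hmemBox key hRne hBoxvol hc
  calc (s.card : ℝ) = ((s.card : ℝ) * covol) * covol⁻¹ :=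
        (mul_inv_cancel_right₀ hcovol0.ne' _).symm
    _ ≤ ((2*R) ^ InfinitePlace.nrRealPlaces K *
          (R^2 * Real.pi) ^ InfinitePlace.nrComplexPlaces K) * covol⁻¹ :=
        mul_le_mul_of_nonneg_right key2 (inv_nonneg.mpr hcovol0.le)
    _ = 2 ^ (InfinitePlace.nrRealPlaces K + InfinitePlace.nrComplexPlaces K) *
          Real.pi ^ InfinitePlace.nrComplexPlaces K *
          R ^ (InfinitePlace.nrRealPlaces K + 2 * InfinitePlace.nrComplexPlaces K) * D⁻¹ := by
        rw [hcovol, mul_inv, ← inv_pow, inv_inv, mul_pow, mul_pow, pow_add, pow_add, pow_mul]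
        ring
end

section
/- Let K be a field and α̃_1, α̃_2, α̃_3 pairwise distinct nonzero elements of K, x, y ∈ K with xy ≠ 0, β_i = x − α̃_i y ≠ 0 for all i. The six-term sum T = ∑ over (i,j) ∈ E of sgn(i,j)·β_i α̃_j (with the sign convention of T = β_1α̃_2 − β_1α̃_3 + β_2α̃_3 − β_2α̃_1 + β_3α̃_1 − β_3α̃_2) cannot be decomposed into three vanishing subsums of two terms each. -/
/-- The sign of the term indexed `(i,j)` in the six-term sum
`T = β₁α̃₂ - β₁α̃₃ + β₂α̃₃ - β₂α̃₁ + β₃α̃₁ - β₃α̃₂` (indices written `0,1,2`). -/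
def tmSgn {K : Type*} [Field K] (p : Fin 3 × Fin 3) : K :=
  if p = (0, 1) ∨ p = (1, 2) ∨ p = (2, 0) then 1 else -1

/-- The index set `E` of ordered pairs `(i,j)`, `i ≠ j`. -/
def tmE : Finset (Fin 3 × Fin 3) := Finset.univ.filter fun p => p.1 ≠ p.2

/-- The nine "special" two-element subsets of `tmE`: same first index, same
second index, or a transposed pair. -/
def badPairs : Finset (Finset (Fin 3 × Fin 3)) :=
  { {(0,1),(0,2)}, {(1,0),(1,2)}, {(2,0),(2,1)},
    {(1,0),(2,0)}, {(0,1),(2,1)}, {(0,2),(1,2)},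
    {(0,1),(1,0)}, {(1,2),(2,1)}, {(2,0),(0,2)} }

set_option maxRecDepth 100000 in
set_option maxHeartbeats 4000000 in
/-- Any partition of `tmE` into three two-element blocks contains a special pair. -/
lemma tm_comb : ∀ E₁ ∈ tmE.powersetCard 2, ∀ E₂ ∈ tmE.powersetCard 2,
    ∀ E₃ ∈ tmE.powersetCard 2, E₁ ∪ E₂ ∪ E₃ = tmE →
    E₁ ∩ E₂ = ∅ → E₁ ∩ E₃ = ∅ → E₂ ∩ E₃ = ∅ →
    E₁ ∈ badPairs ∨ E₂ ∈ badPairs ∨ E₃ ∈ badPairs := by decide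

/-- The two-term subsum over any special pair is nonzero. -/
lemma tm_bad_sum_ne (K : Type*) [Field K] (a : Fin 3 → K)
    (ha : ∀ i j, i ≠ j → a i ≠ a j) (ha0 : ∀ i, a i ≠ 0)
    (x y : K) (hxy : x * y ≠ 0)
    (β : Fin 3 → K) (hβ : ∀ i, β i = x - a i * y) (hβ0 : ∀ i, β i ≠ 0) :
    ∀ S ∈ badPairs, (∑ p ∈ S, tmSgn p * β p.1 * a p.2) ≠ 0 := by
  have hx : x ≠ 0 := left_ne_zero_of_mul hxy
  have hy : y ≠ 0 := right_ne_zero_of_mul hxy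
  intro S hS
  fin_cases hS
  -- 1: β0(a1 - a2) = 0
  · intro h
    rw [Finset.sum_pair (by decide)] at h
    simp only [tmSgn, Prod.mk.injEq, Fin.reduceEq, and_true, true_and, and_false,
      false_and, or_self, or_false, false_or, true_or, or_true, if_true, if_false,
      reduceIte] at h
    rcases mul_eq_zero.mp (show β 0 * (a 1 - a 2) = 0 by linear_combination h) with h' | h'
    · exact hβ0 0 h'
    · exact ha 1 2 (by decide) (sub_eq_zero.mp h')
  -- 2: β1(a2 - a0) = 0
  · intro h
    rw [Finset.sum_pair (by decide)] at h
    simp only [tmSgn, Prod.mk.injEq, Fin.reduceEq, and_true, true_and, and_false,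
      false_and, or_self, or_false, false_or, true_or, or_true, if_true, if_false,
      reduceIte] at h
    rcases mul_eq_zero.mp (show β 1 * (a 2 - a 0) = 0 by linear_combination h) with h' | h'
    · exact hβ0 1 h'
    · exact ha 2 0 (by decide) (sub_eq_zero.mp h')
  -- 3: β2(a0 - a1) = 0
  · intro h
    rw [Finset.sum_pair (by decide)] at h
    simp only [tmSgn, Prod.mk.injEq, Fin.reduceEq, and_true, true_and, and_false,
      false_and, or_self, or_false, false_or, true_or, or_true, if_true, if_false,
      reduceIte] at h
    rcases mul_eq_zero.mp (show β 2 * (a 0 - a 1) = 0 by linear_combination h) with h' | h'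
    · exact hβ0 2 h'
    · exact ha 0 1 (by decide) (sub_eq_zero.mp h')
  -- 4: (β2 - β1) a0 = (a1 - a2) y a0 = 0
  · intro h
    rw [Finset.sum_pair (by decide)] at h
    simp only [tmSgn, Prod.mk.injEq, Fin.reduceEq, and_true, true_and, and_false,
      false_and, or_self, or_false, false_or, true_or, or_true, if_true, if_false,
      reduceIte] at h
    rw [hβ 1, hβ 2] at h
    rcases mul_eq_zero.mp (show (a 1 - a 2) * y * a 0 = 0 by linear_combination h) with h' | h'
    · rcases mul_eq_zero.mp h' with h'' | h''
      · exact ha 1 2 (by decide) (sub_eq_zero.mp h'')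
      · exact hy h''
    · exact ha0 0 h'
  -- 5: (β0 - β2) a1 = (a2 - a0) y a1 = 0
  · intro h
    rw [Finset.sum_pair (by decide)] at h
    simp only [tmSgn, Prod.mk.injEq, Fin.reduceEq, and_true, true_and, and_false,
      false_and, or_self, or_false, false_or, true_or, or_true, if_true, if_false,
      reduceIte] at h
    rw [hβ 0, hβ 2] at h
    rcases mul_eq_zero.mp (show (a 2 - a 0) * y * a 1 = 0 by linear_combination h) with h' | h'
    · rcases mul_eq_zero.mp h' with h'' | h''
      · exact ha 2 0 (by decide) (sub_eq_zero.mp h'')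
      · exact hy h''
    · exact ha0 1 h'
  -- 6: (β1 - β0) a2 = (a0 - a1) y a2 = 0
  · intro h
    rw [Finset.sum_pair (by decide)] at h
    simp only [tmSgn, Prod.mk.injEq, Fin.reduceEq, and_true, true_and, and_false,
      false_and, or_self, or_false, false_or, true_or, or_true, if_true, if_false,
      reduceIte] at h
    rw [hβ 0, hβ 1] at h
    rcases mul_eq_zero.mp (show (a 0 - a 1) * y * a 2 = 0 by linear_combination h) with h' | h'
    · rcases mul_eq_zero.mp h' with h'' | h''
      · exact ha 0 1 (by decide) (sub_eq_zero.mp h'')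
      · exact hy h''
    · exact ha0 2 h'
  -- 7: x(a1 - a0) = 0
  · intro h
    rw [Finset.sum_pair (by decide)] at h
    simp only [tmSgn, Prod.mk.injEq, Fin.reduceEq, and_true, true_and, and_false,
      false_and, or_self, or_false, false_or, true_or, or_true, if_true, if_false,
      reduceIte] at h
    rw [hβ 0, hβ 1] at h
    rcases mul_eq_zero.mp (show x * (a 1 - a 0) = 0 by linear_combination h) with h' | h'
    · exact hx h'
    · exact ha 1 0 (by decide) (sub_eq_zero.mp h')
  -- 8: x(a2 - a1) = 0
  · intro h
    rw [Finset.sum_pair (by decide)] at h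
    simp only [tmSgn, Prod.mk.injEq, Fin.reduceEq, and_true, true_and, and_false,
      false_and, or_self, or_false, false_or, true_or, or_true, if_true, if_false,
      reduceIte] at h
    rw [hβ 1, hβ 2] at h
    rcases mul_eq_zero.mp (show x * (a 2 - a 1) = 0 by linear_combination h) with h' | h'
    · exact hx h'
    · exact ha 2 1 (by decide) (sub_eq_zero.mp h')
  -- 9: x(a0 - a2) = 0
  · intro h
    rw [Finset.sum_pair (by decide)] at h
    simp only [tmSgn, Prod.mk.injEq, Fin.reduceEq, and_true, true_and, and_false,
      false_and, or_self, or_false, false_or, true_or, or_true, if_true, if_false,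
      reduceIte] at h
    rw [hβ 0, hβ 2] at h
    rcases mul_eq_zero.mp (show x * (a 0 - a 2) = 0 by linear_combination h) with h' | h'
    · exact hx h'
    · exact ha 0 2 (by decide) (sub_eq_zero.mp h')

/-- With `α̃₁, α̃₂, α̃₃` pairwise distinct and nonzero, `xy ≠ 0`, `βᵢ = x - α̃ᵢ y ≠ 0`,
the six-term sum `T = ∑_{(i,j) ∈ E} sgn(i,j) βᵢ α̃ⱼ` cannot be decomposed into three
vanishing two-term subsums: there is no partition `E = E₁ ∪ E₂ ∪ E₃` into pairs with
each of the three corresponding two-term subsums equal to zero. -/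
theorem stmt_8 (K : Type*) [Field K] (a : Fin 3 → K)
    (ha : ∀ i j, i ≠ j → a i ≠ a j) (ha0 : ∀ i, a i ≠ 0)
    (x y : K) (hxy : x * y ≠ 0)
    (β : Fin 3 → K) (hβ : ∀ i, β i = x - a i * y) (hβ0 : ∀ i, β i ≠ 0) :
    ¬ ∃ E₁ E₂ E₃ : Finset (Fin 3 × Fin 3),
      E₁ ∪ E₂ ∪ E₃ = tmE ∧
      Disjoint E₁ E₂ ∧ Disjoint E₁ E₃ ∧ Disjoint E₂ E₃ ∧
      E₁.card = 2 ∧ E₂.card = 2 ∧ E₃.card = 2 ∧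
      (∑ p ∈ E₁, tmSgn p * β p.1 * a p.2) = 0 ∧
      (∑ p ∈ E₂, tmSgn p * β p.1 * a p.2) = 0 ∧
      (∑ p ∈ E₃, tmSgn p * β p.1 * a p.2) = 0 := by
  rintro ⟨E₁, E₂, E₃, hun, h12, h13, h23, hc1, hc2, hc3, hs1, hs2, hs3⟩
  have hsub1 : E₁ ⊆ tmE := hun ▸ (Finset.subset_union_left.trans Finset.subset_union_left)
  have hsub2 : E₂ ⊆ tmE := hun ▸ (Finset.subset_union_right.trans Finset.subset_union_left)
  have hsub3 : E₃ ⊆ tmE := hun ▸ Finset.subset_union_right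
  have hbad := tm_comb E₁ (Finset.mem_powersetCard.mpr ⟨hsub1, hc1⟩)
    E₂ (Finset.mem_powersetCard.mpr ⟨hsub2, hc2⟩)
    E₃ (Finset.mem_powersetCard.mpr ⟨hsub3, hc3⟩) hun
    (Finset.disjoint_iff_inter_eq_empty.mp h12)
    (Finset.disjoint_iff_inter_eq_empty.mp h13)
    (Finset.disjoint_iff_inter_eq_empty.mp h23)
  rcases hbad with hb | hb | hb
  · exact tm_bad_sum_ne K a ha ha0 x y hxy β hβ hβ0 E₁ hb hs1
  · exact tm_bad_sum_ne K a ha ha0 x y hxy β hβ hβ0 E₂ hb hs2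
  · exact tm_bad_sum_ne K a ha ha0 x y hxy β hβ hβ0 E₃ hb hs3
end
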